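/- (Key descent inequality for the hinge penalty method.) Let E be a real inner product space, let F : E → ℝ be ρ₀-weakly convex, let h_k : E → ℝ be ρ₁-weakly convex for k = 1, …, m (m ≥ 1), let β > 0, and let Φ(x) = F(x) + (β/m)·Σ_{k=1}^m [h_k(x)]_+. Set C = ρ₀ + β·ρ₁ and ρ̄ = 2C. Let x ∈ E and suppose x̄ minimizes y ↦ Φ(y) + (ρ̄/2)·‖y − x‖² over E. Let v be a ρ₀-subgradient of F at x, and for each k let u_k ∈ ℝ, let s_k be a subgradient of the hinge function at u_k, and let w_k be a ρ₁-subgradient of h_k at x. Then ⟪v + (β/m)·Σ_{k=1}^m s_k·w_k, x̄ − x⟫ ≤ −(ρ̄/2)·‖x̄ − x‖² + (β/m)·Σ_{k=1}^m ([h_k(x)]_+ − [u_k]_+ − s_k·(h_k(x) − u_k)). -/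

import Mathlib

open scoped RealInnerProductSpace BigOperators

lemma norm_combo_sq {E : Type*} [NormedAddCommGroup E] [InnerProductSpace ℝ E]
    (a b : ℝ) (hab : a + b = 1) (x y : E) :
    ‖a • x + b • y‖ ^ 2 = a * ‖x‖ ^ 2 + b * ‖y‖ ^ 2 - a * b * ‖x - y‖ ^ 2 := by
  simp only [← real_inner_self_eq_norm_sq, inner_add_left, inner_add_right,
    inner_sub_left, inner_sub_right, real_inner_smul_left, real_inner_smul_right,
    real_inner_comm x y]
  have hb : b = 1 - a := by linarith
  subst hb; ring

lemma hinge_sub_bounds (u s : ℝ) (hs : ∀ z : ℝ, max z 0 ≥ max u 0 + s * (z - u)) :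
    0 ≤ s ∧ s ≤ 1 := by
  constructor
  · have h1 := hs (u - 1)
    have h2 : max (u - 1) 0 ≤ max u 0 := max_le_max (by linarith) le_rfl
    nlinarith
  · have h1 := hs (u + 1)
    have h2 : max (u + 1) 0 ≤ max u 0 + 1 := by
      rcases le_total (u + 1) 0 with hc | hc
      · simp [max_eq_right hc]; positivity
      · have hub : u + 1 ≤ max u 0 + 1 := by simp [le_max_left]
        exact max_le hub (by positivity)
    nlinarith

lemma strong_min {E : Type*} [NormedAddCommGroup E] [InnerProductSpace ℝ E]
    (ψ : E → ℝ) (hψ : ConvexOn ℝ Set.univ ψ) (C : ℝ) (hC : 0 ≤ C) (a xb : E)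
    (hmin : ∀ y, ψ xb + C / 2 * ‖xb - a‖ ^ 2 ≤ ψ y + C / 2 * ‖y - a‖ ^ 2) (y : E) :
    ψ xb + C / 2 * ‖xb - a‖ ^ 2 + C / 2 * ‖y - xb‖ ^ 2 ≤ ψ y + C / 2 * ‖y - a‖ ^ 2 := by
  have key : ∀ t : ℝ, 0 < t → t ≤ 1 →
      ψ xb + C / 2 * ‖xb - a‖ ^ 2 + C / 2 * (1 - t) * ‖y - xb‖ ^ 2
        ≤ ψ y + C / 2 * ‖y - a‖ ^ 2 := by
    intro t ht0 ht1
    have hconv := hψ.2 (Set.mem_univ xb) (Set.mem_univ y) (by linarith : (0:ℝ) ≤ 1 - t)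
      ht0.le (by ring)
    have hz : (1 - t) • xb + t • y - a = (1 - t) • (xb - a) + t • (y - a) := by
      module
    have hq : ‖(1 - t) • xb + t • y - a‖ ^ 2
        = (1 - t) * ‖xb - a‖ ^ 2 + t * ‖y - a‖ ^ 2 - (1 - t) * t * ‖y - xb‖ ^ 2 := by
      rw [hz, norm_combo_sq (1 - t) t (by ring)]
      rw [sub_sub_sub_cancel_right, norm_sub_rev xb y]
    have hm := hmin ((1 - t) • xb + t • y)
    rw [hq] at hm
    simp only [smul_eq_mul] at hconv
    nlinarith [ht0, sq_nonneg ‖y - xb‖]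
  by_contra hcon
  push_neg at hcon
  set S := C / 2 * ‖y - xb‖ ^ 2 with hSdef
  have hS : 0 ≤ S := by positivity
  set ε := (ψ xb + C / 2 * ‖xb - a‖ ^ 2 + S) - (ψ y + C / 2 * ‖y - a‖ ^ 2) with hεdef
  have hε : 0 < ε := by simp only [hεdef]; linarith
  set t := min 1 (ε / (2 * (S + 1))) with htdef
  have ht0 : 0 < t := lt_min one_pos (by positivity)
  have ht1 : t ≤ 1 := min_le_left _ _
  have ht2 : t * (2 * (S + 1)) ≤ ε := by
    have := min_le_right 1 (ε / (2 * (S + 1)))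
    calc t * (2 * (S + 1)) ≤ ε / (2 * (S + 1)) * (2 * (S + 1)) := by
          apply mul_le_mul_of_nonneg_right this (by positivity)
      _ = ε := by field_simp
  have hk := key t ht0 ht1
  have heq : C / 2 * (1 - t) * ‖y - xb‖ ^ 2 = S - t * S := by rw [hSdef]; ring
  rw [heq] at hk
  have ht2' : 2 * (t * S) + 2 * t ≤ ε := by linear_combination ht2
  clear_value t ε S
  linarith [mul_nonneg ht0.le hS]

lemma convexOn_sum_fin {E : Type*} [NormedAddCommGroup E] [InnerProductSpace ℝ E]
    {m : ℕ} (g : Fin m → E → ℝ) (hg : ∀ k, ConvexOn ℝ Set.univ (g k)) :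
    ConvexOn ℝ Set.univ (fun y => ∑ k, g k y) := by
  refine ⟨convex_univ, fun p _ q _ a b ha hb hab => ?_⟩
  simp only [smul_eq_mul, Finset.mul_sum, ← Finset.sum_add_distrib]
  exact Finset.sum_le_sum fun k _ =>
    (hg k).2 (Set.mem_univ p) (Set.mem_univ q) ha hb hab

lemma convexOn_normsq {E : Type*} [NormedAddCommGroup E] [InnerProductSpace ℝ E] :
    ConvexOn ℝ Set.univ (fun y : E => ‖y‖ ^ 2) := by
  refine ⟨convex_univ, fun p _ q _ a b ha hb hab => ?_⟩
  simp only [smul_eq_mul]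
  rw [norm_combo_sq a b hab]
  nlinarith [mul_nonneg (mul_nonneg ha hb) (sq_nonneg ‖p - q‖)]

set_option maxHeartbeats 1000000

/-- Key descent inequality for the hinge penalty method: with C = ρ₀ + β·ρ₁,
ρ̄ = 2C, and xb the proximal point of Φ at x with parameter 1/ρ̄,
⟪v + (β/m)·Σ_k s_k·w_k, xb − x⟫ ≤ −(ρ̄/2)‖xb − x‖²
  + (β/m)·Σ_k ([h_k(x)]_+ − [u_k]_+ − s_k(h_k(x) − u_k)). -/
theorem hinge_penalty_descent_inequality
    {E : Type*} [NormedAddCommGroup E] [InnerProductSpace ℝ E]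
    (m : ℕ) (hm : 1 ≤ m) (F : E → ℝ) (h : Fin m → E → ℝ)
    (ρ₀ ρ₁ β : ℝ) (hρ₀ : 0 ≤ ρ₀) (hρ₁ : 0 ≤ ρ₁) (hβ : 0 < β)
    -- F is ρ₀-weakly convex, each h_k is ρ₁-weakly convex
    (hFwc : ConvexOn ℝ Set.univ (fun x => F x + ρ₀ / 2 * ‖x‖ ^ 2))
    (hhwc : ∀ k, ConvexOn ℝ Set.univ (fun x => h k x + ρ₁ / 2 * ‖x‖ ^ 2))
    (x xb : E)
    -- xb minimizes y ↦ Φ(y) + (ρ̄/2)‖y − x‖² with ρ̄ = 2(ρ₀ + β·ρ₁)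
    (hmin : ∀ y : E,
      (F xb + β / m * ∑ k, max (h k xb) 0)
          + 2 * (ρ₀ + β * ρ₁) / 2 * ‖xb - x‖ ^ 2
        ≤ (F y + β / m * ∑ k, max (h k y) 0)
          + 2 * (ρ₀ + β * ρ₁) / 2 * ‖y - x‖ ^ 2)
    -- v is a ρ₀-subgradient of F at x
    (v : E)
    (hv : ∀ y : E, F y ≥ F x + ⟪v, y - x⟫ - ρ₀ / 2 * ‖y - x‖ ^ 2)
    (u s : Fin m → ℝ)
    -- s_k is a subgradient of the hinge function at u_k
    (hs : ∀ k, ∀ z : ℝ, max z 0 ≥ max (u k) 0 + s k * (z - u k))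
    -- w_k is a ρ₁-subgradient of h_k at x
    (w : Fin m → E)
    (hw : ∀ k, ∀ y : E, h k y ≥ h k x + ⟪w k, y - x⟫ - ρ₁ / 2 * ‖y - x‖ ^ 2) :
    ⟪v + (β / m) • ∑ k, s k • w k, xb - x⟫
      ≤ -(2 * (ρ₀ + β * ρ₁) / 2) * ‖xb - x‖ ^ 2
        + β / m * ∑ k, (max (h k x) 0 - max (u k) 0 - s k * (h k x - u k)) := by
  have hm0 : (0:ℝ) < m := by exact_mod_cast Nat.lt_of_lt_of_le Nat.zero_lt_one hm
  have hβm : (0:ℝ) < β / m := div_pos hβ hm0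
  have hC : 0 ≤ ρ₀ + β * ρ₁ := by positivity
  -- convexity of ψ = Φ + C/2 ‖·‖²
  have hqconv : ConvexOn ℝ Set.univ (fun y : E => ρ₁ / 2 * ‖y‖ ^ 2) := by
    refine ⟨convex_univ, fun p _ q _ a b ha hb hab => ?_⟩
    simp only [smul_eq_mul]
    have hc := convexOn_normsq.2 (Set.mem_univ p) (Set.mem_univ q) ha hb hab
    simp only [smul_eq_mul] at hc
    nlinarith [mul_le_mul_of_nonneg_left hc (show (0:ℝ) ≤ ρ₁ / 2 by positivity)]
  have hgk : ∀ k, ConvexOn ℝ Set.univ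
      (fun y => max (h k y) 0 + ρ₁ / 2 * ‖y‖ ^ 2) := by
    intro k
    have h1 := (hhwc k).sup hqconv
    have he : (fun y : E => max (h k y) 0 + ρ₁ / 2 * ‖y‖ ^ 2)
        = ((fun y : E => h k y + ρ₁ / 2 * ‖y‖ ^ 2) ⊔ fun y : E => ρ₁ / 2 * ‖y‖ ^ 2) := by
      funext y
      simp only [Pi.sup_apply]
      rcases le_total (h k y) 0 with hc | hc
      · rw [max_eq_right hc, max_eq_right (by linarith), zero_add]
      · rw [max_eq_left hc, max_eq_left (by linarith)]
    rw [he]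
    exact h1
  have hsumconv := convexOn_sum_fin _ hgk
  have hψconv : ConvexOn ℝ Set.univ
      (fun y : E => (F y + β / m * ∑ k, max (h k y) 0)
        + (ρ₀ + β * ρ₁) / 2 * ‖y‖ ^ 2) := by
    have h2 := hsumconv.smul (le_of_lt hβm)
    have h3 := hFwc.add h2
    have he : ((fun x : E => F x + ρ₀ / 2 * ‖x‖ ^ 2)
          + fun y : E => (β / (m:ℝ)) • ∑ k, (max (h k y) 0 + ρ₁ / 2 * ‖y‖ ^ 2))
        = fun y : E => (F y + β / m * ∑ k, max (h k y) 0)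
            + (ρ₀ + β * ρ₁) / 2 * ‖y‖ ^ 2 := by
      funext y
      simp only [Pi.add_apply, smul_eq_mul, Finset.sum_add_distrib, Finset.sum_const,
        Finset.card_univ, Fintype.card_fin, nsmul_eq_mul]
      field_simp
      ring
    rw [← he]
    exact h3
  -- translation identity
  have iden : ∀ z : E, (ρ₀ + β * ρ₁) * ‖z - x‖ ^ 2
      = (ρ₀ + β * ρ₁) / 2 * ‖z‖ ^ 2 + (ρ₀ + β * ρ₁) / 2 * ‖z - (2:ℝ) • x‖ ^ 2
        - (ρ₀ + β * ρ₁) * ‖x‖ ^ 2 := by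
    intro z
    have h1 : ‖z - x‖ ^ 2 = ‖z‖ ^ 2 - 2 * ⟪z, x⟫ + ‖x‖ ^ 2 := norm_sub_sq_real z x
    have h2 : ‖z - (2:ℝ) • x‖ ^ 2 = ‖z‖ ^ 2 - 2 * ⟪z, (2:ℝ) • x⟫ + ‖(2:ℝ) • x‖ ^ 2 :=
      norm_sub_sq_real z _
    rw [real_inner_smul_right] at h2
    have h3 : ‖(2:ℝ) • x‖ ^ 2 = 4 * ‖x‖ ^ 2 := by
      rw [norm_smul, Real.norm_two]; ring
    rw [h3] at h2
    rw [h1, h2]; ring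
  -- improved minimality via strong convexity
  have hmin' : ∀ y : E,
      ((F xb + β / m * ∑ k, max (h k xb) 0) + (ρ₀ + β * ρ₁) / 2 * ‖xb‖ ^ 2)
        + (ρ₀ + β * ρ₁) / 2 * ‖xb - (2:ℝ) • x‖ ^ 2
      ≤ ((F y + β / m * ∑ k, max (h k y) 0) + (ρ₀ + β * ρ₁) / 2 * ‖y‖ ^ 2)
        + (ρ₀ + β * ρ₁) / 2 * ‖y - (2:ℝ) • x‖ ^ 2 := by
    intro y
    have h1 := hmin y
    have i1 := iden xb
    have i2 := iden y
    linarith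
  have hkey := strong_min _ hψconv (ρ₀ + β * ρ₁) hC ((2:ℝ) • x) xb hmin' x
  beta_reduce at hkey
  rw [norm_sub_rev x xb] at hkey
  have i1 := iden xb
  have i2 := iden x
  rw [sub_self, norm_zero] at i2
  have key : (F xb + β / m * ∑ k, max (h k xb) 0)
      + (ρ₀ + β * ρ₁) * ‖xb - x‖ ^ 2 + (ρ₀ + β * ρ₁) / 2 * ‖xb - x‖ ^ 2
      ≤ F x + β / m * ∑ k, max (h k x) 0 := by
    nlinarith [hkey, i1, i2]
  -- per-coordinate hinge inequalities
  have hk_ineq : ∀ k, max (u k) 0 + s k * (h k x - u k) + ⟪s k • w k, xb - x⟫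
      - ρ₁ / 2 * ‖xb - x‖ ^ 2 ≤ max (h k xb) 0 := by
    intro k
    obtain ⟨hs0, hs1⟩ := hinge_sub_bounds (u k) (s k) (hs k)
    have h1 := hs k (h k xb)
    have h2 := hw k xb
    have t1 : 0 ≤ s k * (h k xb - (h k x + ⟪w k, xb - x⟫ - ρ₁ / 2 * ‖xb - x‖ ^ 2)) :=
      mul_nonneg hs0 (sub_nonneg.mpr h2)
    have t2 : 0 ≤ (1 - s k) * (ρ₁ * ‖xb - x‖ ^ 2) :=
      mul_nonneg (by linarith) (mul_nonneg hρ₁ (sq_nonneg _))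
    rw [real_inner_smul_left]
    linarith [h1, t1, t2]
  have hsum : ∑ k, (max (u k) 0 + s k * (h k x - u k) + ⟪s k • w k, xb - x⟫
        - ρ₁ / 2 * ‖xb - x‖ ^ 2) ≤ ∑ k, max (h k xb) 0 :=
    Finset.sum_le_sum fun k _ => hk_ineq k
  have hexp : ∑ k, (max (u k) 0 + s k * (h k x - u k) + ⟪s k • w k, xb - x⟫
        - ρ₁ / 2 * ‖xb - x‖ ^ 2)
      = (∑ k, (max (u k) 0 + s k * (h k x - u k))) + ⟪∑ k, s k • w k, xb - x⟫
        - m * (ρ₁ / 2 * ‖xb - x‖ ^ 2) := by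
    rw [sum_inner]
    simp only [Finset.sum_sub_distrib, Finset.sum_add_distrib, Finset.sum_const,
      Finset.card_univ, Fintype.card_fin, nsmul_eq_mul]
  rw [hexp] at hsum
  have hmul := mul_le_mul_of_nonneg_left hsum hβm.le
  have e1 : β / m * ((∑ k, (max (u k) 0 + s k * (h k x - u k)))
        + ⟪∑ k, s k • w k, xb - x⟫ - m * (ρ₁ / 2 * ‖xb - x‖ ^ 2))
      = β / m * (∑ k, (max (u k) 0 + s k * (h k x - u k)))
        + β / m * ⟪∑ k, s k • w k, xb - x⟫ - β * (ρ₁ / 2 * ‖xb - x‖ ^ 2) := by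
    field_simp
  rw [e1] at hmul
  have eT : ∑ k, (max (h k x) 0 - max (u k) 0 - s k * (h k x - u k))
      = (∑ k, max (h k x) 0) - ∑ k, (max (u k) 0 + s k * (h k x - u k)) := by
    simp only [sub_sub]
    exact Finset.sum_sub_distrib _ _
  rw [inner_add_left, real_inner_smul_left, eT]
  have hvx := hv xb
  linarith [key, hvx, hmul]
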